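/- Fix T ∈ ℕ, an initial state x₀ ∈ ℝ^d, differentiable maps g_t : ℝ^d × ℝ^k → ℝ^d for t = 0,…,T−1, a differentiable terminal loss L : ℝ^d → ℝ, and a differentiable running cost R : ℝ^k → ℝ with weight δ ≥ 0. For controls W = (W₀,…,W_{T−1}) ∈ (ℝ^k)^T define the states X₀ = x₀, X_{t+1} = g_t(X_t, W_t), the objective J(W) = L(X_T) + δ·Σ_{t=0}^{T−1} R(W_t), and the adjoint variables P_T = −∇L(X_T), P_t = (D_x g_t(X_t, W_t))ᵀ P_{t+1} for t = T−1,…,1. Then for each t, the partial gradient of J with respect to W_t equals −( (D_W g_t(X_t, W_t))ᵀ P_{t+1} − δ·∇R(W_t) ), i.e. ∇_{W_t} J = −∇_W H(t, X_t, P_{t+1}, W_t) where H(t, x, p, W) = p · g_t(x, W) − δ R(W) is the discrete Hamiltonian. Consequently, replacing the maximization step of the method of successive approximations by a gradient ascent step on the Hamiltonian is the same as gradient descent on J. -/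

import Mathlib

open Finset

variable {E F : Type*} [NormedAddCommGroup E] [InnerProductSpace ℝ E] [CompleteSpace E]
  [NormedAddCommGroup F] [InnerProductSpace ℝ F] [CompleteSpace F]

lemma grad_comp' (f : E → ℝ) (φ : F → E) (x : F)
    (hf : DifferentiableAt ℝ f (φ x)) (hφ : DifferentiableAt ℝ φ x) :
    gradient (fun w => f (φ w)) x
      = ContinuousLinearMap.adjoint (fderiv ℝ φ x) (gradient f (φ x)) := by
  apply ext_inner_right ℝ
  intro v
  rw [gradient, InnerProductSpace.toDual_symm_apply,
    ContinuousLinearMap.adjoint_inner_left, gradient, InnerProductSpace.toDual_symm_apply,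
    show (fun w => f (φ w)) = f ∘ φ from rfl, fderiv_comp x hf hφ]
  rfl

lemma grad_add' (f h : F → ℝ) (x : F) (hf : DifferentiableAt ℝ f x)
    (hh : DifferentiableAt ℝ h x) :
    gradient (fun w => f w + h w) x = gradient f x + gradient h x := by
  rw [gradient, gradient, gradient, fderiv_fun_add hf hh, map_add]

lemma grad_const_mul' (f : F → ℝ) (x : F) (c : ℝ) (hf : DifferentiableAt ℝ f x) :
    gradient (fun w => c * f w) x = c • gradient f x := by
  rw [gradient, gradient, fderiv_const_mul hf, map_smul]

lemma grad_add_const' (f : F → ℝ) (x : F) (c : ℝ) :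
    gradient (fun w => f w + c) x = gradient f x := by
  rw [gradient, gradient, fderiv_add_const]

/-- Discrete Pontryagin adjoint identity: for the discrete-time controlled system
`X₀ = x₀`, `X_{t+1} = g_t(X_t, W_t)` with objective
`J(W) = L(X_T) + δ Σ_{t<T} R(W_t)` and adjoint variables
`P_T = −∇L(X_T)`, `P_t = (D_x g_t(X_t,W_t))ᵀ P_{t+1}`, the partial gradient of `J`
with respect to `W_t` equals `−((D_W g_t(X_t,W_t))ᵀ P_{t+1} − δ∇R(W_t))`, i.e.
`∇_{W_t} J = −∇_W H(t, X_t, P_{t+1}, W_t)` for the discrete Hamiltonian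
`H(t,x,p,W) = p ⬝ g_t(x,W) − δ R(W)`. -/
theorem discrete_pmp_gradient {dd kk T : ℕ}
    (x₀ : EuclideanSpace ℝ (Fin dd))
    (g : ℕ → EuclideanSpace ℝ (Fin dd) → EuclideanSpace ℝ (Fin kk) → EuclideanSpace ℝ (Fin dd))
    (hg : ∀ t, Differentiable ℝ
      (fun p : EuclideanSpace ℝ (Fin dd) × EuclideanSpace ℝ (Fin kk) => g t p.1 p.2))
    (L : EuclideanSpace ℝ (Fin dd) → ℝ) (hL : Differentiable ℝ L)
    (R : EuclideanSpace ℝ (Fin kk) → ℝ) (hR : Differentiable ℝ R)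
    (δ : ℝ) (hδ : 0 ≤ δ)
    -- state trajectory as a function of the whole control sequence
    (X : (ℕ → EuclideanSpace ℝ (Fin kk)) → ℕ → EuclideanSpace ℝ (Fin dd))
    (hX0 : ∀ V, X V 0 = x₀)
    (hXs : ∀ V t, X V (t + 1) = g t (X V t) (V t))
    -- the objective
    (J : (ℕ → EuclideanSpace ℝ (Fin kk)) → ℝ)
    (hJ : ∀ V, J V = L (X V T) + δ * ∑ t ∈ range T, R (V t))
    -- a fixed control sequence and the associated adjoint variables
    (W : ℕ → EuclideanSpace ℝ (Fin kk))
    (P : ℕ → EuclideanSpace ℝ (Fin dd))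
    (hPT : P T = -gradient L (X W T))
    (hPs : ∀ t < T, P t =
      ContinuousLinearMap.adjoint (fderiv ℝ (fun x => g t x (W t)) (X W t)) (P (t + 1))) :
    ∀ t < T,
      gradient (fun w => J (Function.update W t w)) (W t)
        = -(ContinuousLinearMap.adjoint (fderiv ℝ (fun w => g t (X W t) w) (W t)) (P (t + 1))
            - δ • gradient R (W t)) := by
  intro t ht
  -- the state as a function of the t-th control
  set φ : ℕ → EuclideanSpace ℝ (Fin kk) → EuclideanSpace ℝ (Fin dd) :=
    fun s w => X (Function.update W t w) s with hφ
  -- states before time t+1 do not depend on w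
  have hconst : ∀ s, s ≤ t → ∀ w, φ s w = X W s := by
    intro s hs
    induction s with
    | zero => intro w; simp [hφ, hX0]
    | succ s ih =>
      intro w
      have hst : s ≠ t := by omega
      simp only [hφ, hXs, Function.update_of_ne hst]
      rw [show X (Function.update W t w) s = φ s w from rfl, ih (by omega)]
  -- evaluating at W t recovers the original trajectory
  have hWt : ∀ s, φ s (W t) = X W s := by
    intro s; simp [hφ, Function.update_eq_self]
  -- the step at time t
  have ht1 : ∀ w, φ (t + 1) w = g t (X W t) w := by
    intro w
    simp only [hφ, hXs, Function.update_self]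
    rw [show X (Function.update W t w) t = φ t w from rfl, hconst t le_rfl]
  -- steps after time t
  have hstep : ∀ s, s ≠ t → ∀ w, φ (s + 1) w = g s (φ s w) (W s) := by
    intro s hs w
    simp [hφ, hXs, Function.update_of_ne hs]
  -- differentiability of the state maps
  have hgx : ∀ s, Differentiable ℝ (fun x => g s x (W s)) := by
    intro s
    exact (hg s).comp (differentiable_id.prodMk (differentiable_const _))
  have hgw : Differentiable ℝ (fun w => g t (X W t) w) :=
    (hg t).comp ((differentiable_const _).prodMk differentiable_id)
  have hdiff : ∀ s, Differentiable ℝ (φ s) := by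
    intro s
    induction s with
    | zero => simpa [hφ, hX0] using differentiable_const x₀
    | succ s ih =>
      by_cases hs : s = t
      · subst hs
        rw [show φ (s + 1) = fun w => g s (X W s) w from funext (ht1 ·)]
        exact (hg s).comp ((differentiable_const _).prodMk differentiable_id)
      · rw [show φ (s + 1) = fun w => g s (φ s w) (W s) from funext (hstep s hs ·)]
        exact (hg s).comp (ih.prodMk (differentiable_const _))
  -- the adjoint telescoping identity
  have key : ∀ s, t + 1 ≤ s → s ≤ T →
      ContinuousLinearMap.adjoint (fderiv ℝ (φ s) (W t)) (P s)
        = ContinuousLinearMap.adjoint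
            (fderiv ℝ (fun w => g t (X W t) w) (W t)) (P (t + 1)) := by
    intro s hs
    induction s, hs using Nat.le_induction with
    | base =>
      intro _
      rw [show φ (t + 1) = fun w => g t (X W t) w from funext (ht1 ·)]
    | succ s hs ih =>
      intro hsT
      have hst : s ≠ t := by omega
      have hcomp : φ (s + 1) = (fun x => g s x (W s)) ∘ (φ s) :=
        funext (hstep s hst ·)
      rw [hcomp, fderiv_comp (W t) ((hgx s).differentiableAt) ((hdiff s).differentiableAt),
        hWt, ContinuousLinearMap.adjoint_comp,
        ContinuousLinearMap.comp_apply, ← hPs s (by omega)]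
      exact ih (by omega)
  -- rewrite the objective as a function of w
  have hJfun : (fun w => J (Function.update W t w))
      = fun w => L (φ T w)
          + (δ * (R w + ∑ s ∈ (range T).erase t, R (W s))) := by
    funext w
    rw [hJ]
    congr 1
    congr 1
    rw [← Finset.add_sum_erase _ _ (mem_range.mpr ht), Function.update_self]
    congr 1
    refine Finset.sum_congr rfl fun s hs => ?_
    rw [Function.update_of_ne (Finset.ne_of_mem_erase hs)]
  have hd1 : DifferentiableAt ℝ (fun w => L (φ T w)) (W t) :=
    (hL.comp (hdiff T)).differentiableAt
  have hd2' : DifferentiableAt ℝ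
      (fun w => R w + ∑ s ∈ (range T).erase t, R (W s)) (W t) :=
    hR.differentiableAt.add_const _
  rw [hJfun, grad_add' _ _ _ hd1 (hd2'.const_mul δ),
    grad_const_mul' _ _ _ hd2', grad_add_const',
    grad_comp' L (φ T) (W t) (by rw [hWt]; exact hL.differentiableAt)
      ((hdiff T).differentiableAt),
    hWt, show gradient L (X W T) = -(P T) by rw [hPT, neg_neg],
    map_neg, key T (by omega) le_rfl]
  abel
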